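/- arXiv:2512.01138 — 14 statements merged into one kernel-verified Lean document; each statement's English description precedes it below -/
import Mathlib

section
/- Let V be a finite nonempty set and let f, g : V → V be arbitrary functions. Then there exists v ∈ V such that f(f(g(v))) ≠ f(v) or f(g(v)) = v. (Totality of the Nephew search problem.) -/
/-- An element `v` is a *Nephew solution* for `(f, g)` if
`f (f (g v)) ≠ f v` or `f (g v) = v`. -/
def NephewSol {V : Type*} (f g : V → V) (v : V) : Prop :=
  f (f (g v)) ≠ f v ∨ f (g v) = v

/-- **Totality of the Nephew search problem.** On any finite nonempty set `V`,
for arbitrary `f g : V → V` there is a Nephew solution. -/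
theorem nephew_total {V : Type*} [Finite V] [Nonempty V] (f g : V → V) :
    ∃ v : V, NephewSol f g v := by
  by_contra hc
  push_neg at hc
  simp only [NephewSol, not_or, not_ne_iff] at hc
  -- hc : ∀ v, f (f (g v)) = f v ∧ f (g v) ≠ v
  let A := Set.range f
  let F : A → A := fun a => ⟨f a, Set.mem_range_self _⟩
  have hsurj : Function.Surjective F := by
    rintro ⟨a, v, rfl⟩
    exact ⟨⟨f (g v), Set.mem_range_self _⟩, Subtype.ext (hc v).1⟩
  have hinj : Function.Injective F := Finite.injective_iff_surjective.2 hsurj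
  obtain ⟨v⟩ := ‹Nonempty V›
  have h1 : F ⟨f (g (f v)), Set.mem_range_self _⟩ = F ⟨f v, Set.mem_range_self _⟩ :=
    Subtype.ext (hc (f v)).1
  exact (hc (f v)).2 (congrArg Subtype.val (hinj h1))
end

section
/- Let V be a finite type with a distinguished element r and let F, L, R : V → V. Then L(r) = r, or R(r) = r, or there exists u ∈ V such that F(L(u)) ≠ u, or F(R(u)) ≠ u, or (L(u) = R(u) and L(u) ≠ u). (Totality of the Empty-Child′ search problem; in particular the Empty-Child problem, whose solutions additionally allow the witness F(r) ≠ r, is also total.) -/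
/-- **Totality of the Empty-Child′ search problem.** On a finite type `V` with a
distinguished root `r` and functions `F L R : V → V`, either `L r = r`, or `R r = r`,
or some vertex `u` has an "empty child": `F (L u) ≠ u`, or `F (R u) ≠ u`, or
`L u = R u` with `L u ≠ u`. -/
theorem emptyChild'_total {V : Type*} [Finite V] (r : V) (F L R : V → V) :
    L r = r ∨ R r = r ∨
      ∃ u : V, F (L u) ≠ u ∨ F (R u) ≠ u ∨ (L u = R u ∧ L u ≠ u) := by
  by_contra h
  push_neg at h
  obtain ⟨hLr, hRr, hu⟩ := h
  have hFL : ∀ u, F (L u) = u := fun u => (hu u).1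
  have hFR : ∀ u, F (R u) = u := fun u => (hu u).2.1
  have hEq : ∀ u, L u = R u → L u = u := fun u => (hu u).2.2
  have hFsurj : Function.Surjective F := fun u => ⟨L u, hFL u⟩
  have hFinj : Function.Injective F := Finite.injective_iff_surjective.mpr hFsurj
  have : L r = r := hEq r (hFinj (by rw [hFL, hFR]))
  exact hLr this
end

section
/- Let V be a set with a distinguished element r, let F, L, R : V → V, and let ℓ ∈ ℕ. For a string x = (x_1, …, x_{ℓ+1}) ∈ {0,1}^{ℓ+1} define down(x) ∈ V by v_0 := r, and for i = 1, …, ℓ+1, v_i := L(v_{i−1}) if x_i = 0 and v_i := R(v_{i−1}) if x_i = 1; set down(x) := v_{ℓ+1}. For v ∈ V define up(v) ∈ {0,1}^{ℓ+1} by u_{ℓ+1} := v and, for i = ℓ+1 down to 1: y_i := 0 if u_i = L(F(u_i)) and y_i := 1 otherwise, and u_{i−1} := F(u_i); set up(v) := (y_1, …, y_{ℓ+1}). If there exists x ∈ {0,1}^{ℓ+1} with up(down(x)) ≠ x, then L(r) = r, or R(r) = r, or some u ∈ V has an empty child. -/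
/-- Walk down from `v` following the direction string `x`
(`false` means go to the left child `L`, `true` to the right child `R`). -/
def downWalk {V : Type*} (L R : V → V) : V → List Bool → V
  | v, [] => v
  | v, b :: p => downWalk L R (if b then R v else L v) p

open Classical in
/-- Walk up `k` steps from `v` via the father function `F`, recording at each step
`false` if the current vertex is the left child of its father and `true` otherwise;
the resulting string is listed from top to bottom. -/
noncomputable def upWalk {V : Type*} (F L : V → V) : V → ℕ → List Bool
  | _, 0 => []
  | v, k + 1 => upWalk F L (F v) k ++ [if v = L (F v) then false else true]

lemma downWalk_append {V : Type*} (L R : V → V) (v : V) (x : List Bool) (b : Bool) :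
    downWalk L R v (x ++ [b]) = (if b then R (downWalk L R v x) else L (downWalk L R v x)) := by
  induction x generalizing v with
  | nil => simp [downWalk]
  | cons c p ih => simp [downWalk, ih]

lemma downWalk_inv {V : Type*} (F L R : V → V)
    (hF : ∀ u, F (L u) = u) (hFR : ∀ u, F (R u) = u)
    (heq : ∀ u, L u = R u → L u = u) (v : V) (hv : L v ≠ R v) (x : List Bool) :
    L (downWalk L R v x) ≠ R (downWalk L R v x) := by
  induction x generalizing v with
  | nil => exact hv
  | cons b p ih =>
    simp only [downWalk]
    apply ih
    intro hc
    set c := (if b then R v else L v) with hcdef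
    have h1 : L c = c := heq _ hc
    have h2 : F c = v := by cases b <;> simp [hcdef, hF, hFR]
    have h3 : F c = c := by conv_lhs => rw [← h1, hF]
    have hcv : c = v := h3.symm.trans h2
    apply hv
    rw [← hcv]; exact hc

lemma main_lemma {V : Type*} (F L R : V → V)
    (hF : ∀ u, F (L u) = u) (hFR : ∀ u, F (R u) = u)
    (heq : ∀ u, L u = R u → L u = u) (v : V) (hv : L v ≠ R v) (x : List Bool) :
    upWalk F L (downWalk L R v x) x.length = x := by
  induction x using List.reverseRecOn with
  | nil => simp [upWalk]
  | append_singleton p b ih =>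
    rw [downWalk_append]
    have hw := downWalk_inv F L R hF hFR heq v hv p
    set w := downWalk L R v p with hwdef
    have hlen : (p ++ [b]).length = p.length + 1 := by simp
    rw [hlen]
    cases b with
    | false =>
      rw [show (if (false : Bool) = true then R w else L w) = L w from by simp,
        upWalk, hF, if_pos rfl, ih]
    | true =>
      rw [show (if (true : Bool) = true then R w else L w) = R w from by simp,
        upWalk, hFR, if_neg (fun h : R w = L w => hw h.symm), ih]

/-- **Correctness of the reduction from Empty-Child′ to Lossy-Code.**
If some direction string `x` of length `ℓ + 1` satisfies `up (down x) ≠ x`, then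
`L r = r`, or `R r = r`, or some vertex has an empty child. -/
theorem emptyChild'_to_lossyCode {V : Type*} (r : V) (F L R : V → V) (ℓ : ℕ)
    (h : ∃ x : List Bool, x.length = ℓ + 1 ∧
      upWalk F L (downWalk L R r x) (ℓ + 1) ≠ x) :
    L r = r ∨ R r = r ∨
      ∃ u : V, F (L u) ≠ u ∨ F (R u) ≠ u ∨ (L u = R u ∧ L u ≠ u) := by
  by_contra hc
  push_neg at hc
  obtain ⟨hLr, hRr, hgood⟩ := hc
  obtain ⟨x, hx, hne⟩ := h
  have hF : ∀ u, F (L u) = u := fun u => (hgood u).1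
  have hFR : ∀ u, F (R u) = u := fun u => (hgood u).2.1
  have heq : ∀ u, L u = R u → L u = u := fun u => (hgood u).2.2
  have hvr : L r ≠ R r := fun h => hLr (heq r h)
  apply hne
  rw [← hx]
  exact main_lemma F L R hF hFR heq r hvr x
end

section
/- Let V be a set and f, g : V → V. Suppose v ∈ V is such that none of v, g(v), f(g(v)), g(f(g(v))) is a Nephew solution for (f, g). Put a := g(v) and b := g(f(g(v))). Then: (i) a ≠ b; (ii) f(a) ≠ f(b); and (iii) f(f(a)) = f(f(b)) = f(v). -/
/-- Properties of the children `a = g v` and `b = g (f (g v))` produced by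
`FindChildren`: if none of `v`, `g v`, `f (g v)`, `g (f (g v))` is a Nephew solution,
then (i) `a ≠ b`, (ii) `f a ≠ f b`, and (iii) `f (f a) = f (f b) = f v`. -/
theorem findChildren_properties {V : Type*} (f g : V → V) (v : V)
    (h0 : ¬ NephewSol f g v)
    (h1 : ¬ NephewSol f g (g v))
    (h2 : ¬ NephewSol f g (f (g v)))
    (h3 : ¬ NephewSol f g (g (f (g v)))) :
    g v ≠ g (f (g v)) ∧
    f (g v) ≠ f (g (f (g v))) ∧
    f (f (g v)) = f v ∧ f (f (g (f (g v)))) = f v := by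
  simp only [NephewSol, not_or, not_ne_iff] at h0 h1 h2 h3
  obtain ⟨e0, n0⟩ := h0
  obtain ⟨e2, n2⟩ := h2
  have hfb : f (g v) ≠ f (g (f (g v))) := fun h => n2 h.symm
  exact ⟨fun h => hfb (congrArg f h), hfb, e0, e2.trans e0⟩
end

section
/- Let V be a finite set and f, g : V → V. Suppose v ∈ V is such that none of v, g(v), f(g(v)), g(f(g(v))) is a Nephew solution for (f, g), and suppose ℓ_f(v) ≥ 2. Put a := g(v) and b := g(f(g(v))). Then ℓ_f(a) = ℓ_f(b) = ℓ_f(v) + 1. -/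
/-- `w` is a periodic point of `f`: some positive iterate of `f` fixes `w`. -/
def NephewPeriodic {V : Type*} (f : V → V) (w : V) : Prop :=
  ∃ k : ℕ, 1 ≤ k ∧ f^[k] w = w

/-- The *level* of `v`: the least `k ≥ 0` such that `f^[k] v` is a periodic point. -/
noncomputable def level {V : Type*} (f : V → V) (v : V) : ℕ :=
  sInf {k : ℕ | NephewPeriodic f (f^[k] v)}

lemma nephewPeriodic_iterate {V : Type*} (f : V → V) (w : V) (m : ℕ)
    (h : NephewPeriodic f w) : NephewPeriodic f (f^[m] w) := by
  obtain ⟨k, hk1, hk⟩ := h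
  exact ⟨k, hk1, by rw [← Function.iterate_add_apply, Nat.add_comm,
    Function.iterate_add_apply, hk]⟩

lemma nephewSet_nonempty {V : Type*} [Finite V] (f : V → V) (v : V) :
    {k : ℕ | NephewPeriodic f (f^[k] v)}.Nonempty := by
  obtain ⟨i, j, hij, heq⟩ := Finite.exists_ne_map_eq_of_infinite (fun n : ℕ => f^[n] v)
  rcases Nat.lt_or_ge i j with h | h
  · refine ⟨i, ⟨j - i, by omega, ?_⟩⟩
    rw [← Function.iterate_add_apply]
    rw [show j - i + i = j by omega]
    exact heq.symm
  · have hlt : j < i := lt_of_le_of_ne h (Ne.symm hij)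
    refine ⟨j, ⟨i - j, by omega, ?_⟩⟩
    rw [← Function.iterate_add_apply]
    rw [show i - j + j = i by omega]
    exact heq

lemma level_eq_of {V : Type*} (f : V → V) (a : V) (n : ℕ)
    (hmem : NephewPeriodic f (f^[n] a))
    (hnot : ∀ k < n, ¬ NephewPeriodic f (f^[k] a)) : level f a = n := by
  refine le_antisymm (Nat.sInf_le hmem) (le_of_not_gt fun h => ?_)
  have hmem' : level f a ∈ {k : ℕ | NephewPeriodic f (f^[k] a)} := Nat.sInf_mem ⟨n, hmem⟩
  exact hnot _ h hmem'

lemma child_level {V : Type*} [Finite V] (f : V → V) (v a : V)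
    (h2 : f^[2] a = f v) (hv : 2 ≤ level f v) :
    level f a = level f v + 1 := by
  set L := level f v with hL
  have hLa : NephewPeriodic f (f^[L] v) := Nat.sInf_mem (nephewSet_nonempty f v)
  have hnotv : ∀ k < L, ¬ NephewPeriodic f (f^[k] v) := fun k hk =>
    Nat.notMem_of_lt_sInf hk
  refine level_eq_of f a (L + 1) ?_ ?_
  · have : f^[L + 1] a = f^[L] v := by
      rw [show L + 1 = (L - 1) + 2 by omega, Function.iterate_add_apply, h2,
        ← Function.iterate_succ_apply]
      congr 1
      omega
    rw [this]; exact hLa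
  · intro k hk hper
    rcases Nat.lt_or_ge k 2 with hk2 | hk2
    · -- f^[2] a = f v would be periodic, contradicting 1 < L
      have : NephewPeriodic f (f^[2] a) := by
        have := nephewPeriodic_iterate f (f^[k] a) (2 - k) hper
        rwa [← Function.iterate_add_apply, show 2 - k + k = 2 by omega] at this
      rw [h2, ← Function.iterate_one f] at this
      exact hnotv 1 (by omega) this
    · have : f^[k] a = f^[k - 1] v := by
        rw [show k = (k - 2) + 2 by omega, Function.iterate_add_apply, h2,
          ← Function.iterate_succ_apply]
        congr 1
      rw [this] at hper
      exact hnotv (k - 1) (by omega) hper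

/-- If none of `v`, `g v`, `f (g v)`, `g (f (g v))` is a Nephew solution and
`ℓ_f(v) ≥ 2`, then the two children `a = g v` and `b = g (f (g v))` satisfy
`ℓ_f(a) = ℓ_f(b) = ℓ_f(v) + 1`. -/
theorem findChildren_levels {V : Type*} [Finite V] (f g : V → V) (v : V)
    (h0 : ¬ NephewSol f g v)
    (h1 : ¬ NephewSol f g (g v))
    (h2 : ¬ NephewSol f g (f (g v)))
    (h3 : ¬ NephewSol f g (g (f (g v))))
    (hv : 2 ≤ level f v) :
    level f (g v) = level f v + 1 ∧ level f (g (f (g v))) = level f v + 1 := by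
  unfold NephewSol at h0 h2
  push_neg at h0 h2
  have ha : f^[2] (g v) = f v := by
    simpa [Function.iterate_succ_apply] using h0.1
  have hb : f^[2] (g (f (g v))) = f v := by
    have : f (f (g (f (g v)))) = f (f (g v)) := h2.1
    simpa [Function.iterate_succ_apply, h0.1] using this
  exact ⟨child_level f v (g v) ha hv, child_level f v (g (f (g v))) hb hv⟩
end

section
/- Let V be a finite set, f, g : V → V, and v* ∈ V with ℓ_f(v*) ≥ 2. Then f is injective on V*: for all u, u′ ∈ V* with u ≠ u′ we have f(u) ≠ f(u′). -/
/-- `u` *expands* if none of `u`, `g u`, `f (g u)`, `g (f (g u))` is a Nephew solution;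
its children are then `L u = g u` and `R u = g (f (g u))`. -/
def Expands {V : Type*} (f g : V → V) (u : V) : Prop :=
  ¬ NephewSol f g u ∧ ¬ NephewSol f g (g u) ∧
  ¬ NephewSol f g (f (g u)) ∧ ¬ NephewSol f g (g (f (g u)))

/-- `V*`: the smallest subset of `V` containing `v*` and closed under taking the
children `g u` and `g (f (g u))` of every expanding `u`. -/
inductive InVStar {V : Type*} (f g : V → V) (vstar : V) : V → Prop
  | base : InVStar f g vstar vstar
  | left {u : V} : InVStar f g vstar u → Expands f g u → InVStar f g vstar (g u)
  | right {u : V} : InVStar f g vstar u → Expands f g u → InVStar f g vstar (g (f (g u)))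

set_option linter.unusedSectionVars false

section Aux
variable {V : Type*} [Finite V] {f g : V → V}

lemma nephew_nonempty (f : V → V) (v : V) :
    {k : ℕ | NephewPeriodic f (f^[k] v)}.Nonempty := by
  obtain ⟨a, b, hab, h⟩ := Finite.exists_ne_map_eq_of_infinite (fun n : ℕ => f^[n] v)
  rcases hab.lt_or_gt with h1 | h1
  · exact ⟨a, b - a, by omega, by
      rw [← Function.iterate_add_apply, show b - a + a = b by omega]; exact h.symm⟩
  · exact ⟨b, a - b, by omega, by
      rw [← Function.iterate_add_apply, show a - b + b = a by omega]; exact h⟩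

lemma level_spec (f : V → V) (v : V) : NephewPeriodic f (f^[level f v] v) :=
  Nat.sInf_mem (nephew_nonempty f v)

lemma nephew_map {w : V} (h : NephewPeriodic f w) : NephewPeriodic f (f w) := by
  obtain ⟨k, hk, h⟩ := h
  exact ⟨k, hk, by rw [← Function.iterate_succ_apply, Function.iterate_succ_apply', h]⟩

lemma level_eq_zero {v : V} (h : NephewPeriodic f v) : level f v = 0 :=
  Nat.eq_zero_of_le_zero (Nat.sInf_le (by simpa using h))

lemma level_map {v : V} (h : 1 ≤ level f v) : level f (f v) + 1 = level f v := by
  have le1 : level f v ≤ level f (f v) + 1 := by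
    apply Nat.sInf_le
    show NephewPeriodic f (f^[level f (f v) + 1] v)
    rw [Function.iterate_succ_apply]; exact level_spec f (f v)
  have le2 : level f (f v) ≤ level f v - 1 := by
    apply Nat.sInf_le
    show NephewPeriodic f (f^[level f v - 1] (f v))
    rw [← Function.iterate_succ_apply]
    show NephewPeriodic f (f^[level f v - 1 + 1] v)
    rw [show level f v - 1 + 1 = level f v by omega]
    exact level_spec f v
  omega

lemma level_pos_of {v : V} (h : 1 ≤ level f (f v)) : 1 ≤ level f v := by
  by_contra hc
  have hv0 : level f v = 0 := by omega
  have : NephewPeriodic f v := by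
    have := level_spec f v; rwa [hv0] at this
  have := level_eq_zero (nephew_map this)
  omega

lemma lev_child {c u : V} (hc : f (f c) = f u) (hu : 2 ≤ level f u) :
    level f c = level f u + 1 := by
  have e3 : level f (f u) + 1 = level f u := level_map (by omega)
  have hffc : 1 ≤ level f (f (f c)) := by rw [hc]; omega
  have h2 : 1 ≤ level f (f c) := level_pos_of hffc
  have h3 : 1 ≤ level f c := level_pos_of h2
  have e1 := level_map h3
  have e2 := level_map h2
  rw [hc] at e2
  omega

lemma notNS {v : V} (h : ¬ NephewSol f g v) : f (f (g v)) = f v ∧ f (g v) ≠ v := by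
  unfold NephewSol at h; push_neg at h; exact h

lemma ffL {u : V} (h : Expands f g u) : f (f (g u)) = f u := (notNS h.1).1

lemma ffR {u : V} (h : Expands f g u) : f (f (g (f (g u)))) = f u :=
  (notNS h.2.2.1).1.trans (ffL h)

lemma level_ge {vstar u : V} (hv : 2 ≤ level f vstar) (h : InVStar f g vstar u) :
    level f vstar ≤ level f u := by
  induction h with
  | base => exact le_refl _
  | left hp hexp ih =>
      rw [lev_child (ffL hexp) (by omega)]; omega
  | right hp hexp ih =>
      rw [lev_child (ffR hexp) (by omega)]; omega

lemma level_eq_of_feq {a b : V} (ha : 1 ≤ level f a) (hb : 1 ≤ level f b)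
    (h : f a = f b) : level f a = level f b := by
  have e1 := level_map ha
  have e2 := level_map hb
  rw [h] at e1; omega

end Aux

/-- If `ℓ_f(v*) ≥ 2` then `f` is injective on `V*`. -/
theorem f_injective_on_VStar {V : Type*} [Finite V] (f g : V → V) (vstar : V)
    (hv : 2 ≤ level f vstar) :
    ∀ u u' : V, InVStar f g vstar u → InVStar f g vstar u' → u ≠ u' → f u ≠ f u' := by
  have base_child : ∀ c p : V, InVStar f g vstar p → f (f c) = f p → f vstar ≠ f c := by
    intro c p hp hc heq
    have hp2 : level f vstar ≤ level f p := level_ge hv hp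
    have hc2 : level f c = level f p + 1 := lev_child hc (by omega)
    have := level_eq_of_feq (f := f) (by omega : 1 ≤ level f vstar)
      (by omega : 1 ≤ level f c) heq
    omega
  intro u u' hu
  induction hu generalizing u' with
  | base =>
    intro hu' hne heq
    cases hu' with
    | base => exact hne rfl
    | left hp hexp => exact base_child _ _ hp (ffL hexp) heq
    | right hp hexp => exact base_child _ _ hp (ffR hexp) heq
  | @left p hp hexp ih =>
    intro hu' hne heq
    cases hu' with
    | base => exact base_child _ _ hp (ffL hexp) heq.symm
    | @left p' hp' hexp' =>
      have hfpp : f p = f p' := by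
        rw [← ffL hexp, ← ffL hexp', heq]
      by_cases hpp : p = p'
      · subst hpp; exact hne rfl
      · exact ih p' hp' hpp hfpp
    | @right p' hp' hexp' =>
      have hfpp : f p = f p' := by
        rw [← ffL hexp, ← ffR hexp', heq]
      by_cases hpp : p = p'
      · subst hpp
        exact (notNS hexp.2.2.1).2 heq.symm
      · exact ih p' hp' hpp hfpp
  | @right p hp hexp ih =>
    intro hu' hne heq
    cases hu' with
    | base => exact base_child _ _ hp (ffR hexp) heq.symm
    | @left p' hp' hexp' =>
      have hfpp : f p = f p' := by
        rw [← ffR hexp, ← ffL hexp', heq]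
      by_cases hpp : p = p'
      · subst hpp
        exact (notNS hexp.2.2.1).2 heq
      · exact ih p' hp' hpp hfpp
    | @right p' hp' hexp' =>
      have hfpp : f p = f p' := by
        rw [← ffR hexp, ← ffR hexp', heq]
      by_cases hpp : p = p'
      · subst hpp; exact hne rfl
      · exact ih p' hp' hpp hfpp
end

section
/- Let V be a finite set, f, g : V → V, and v* ∈ V with ℓ_f(v*) ≥ 2. Then: (a) there is no expanding w ∈ V* with v* ∈ {L(w), R(w)}; (b) for every u ∈ V* with u ≠ v*, there is exactly one expanding w ∈ V* with u ∈ {L(w), R(w)}; and (c) every expanding u ∈ V* satisfies L(u) ≠ R(u). (Hence the directed graph on V* with an edge from each expanding u to L(u) and to R(u) is a binary tree rooted at v*.) -/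
lemma nephew_exists_periodic {V : Type*} [Finite V] (f : V → V) (v : V) :
    ∃ k : ℕ, NephewPeriodic f (f^[k] v) := by
  obtain ⟨m, n, hmn, h⟩ := Finite.exists_ne_map_eq_of_infinite (fun n : ℕ => f^[n] v)
  rcases lt_or_gt_of_ne hmn with hlt | hlt
  · refine ⟨m, n - m, by omega, ?_⟩
    rw [← Function.iterate_add_apply]
    have : n - m + m = n := by omega
    rw [this]; exact h.symm
  · refine ⟨n, m - n, by omega, ?_⟩
    rw [← Function.iterate_add_apply]
    have : m - n + n = m := by omega
    rw [this]; exact h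

lemma nephew_level_mem {V : Type*} [Finite V] (f : V → V) (v : V) :
    NephewPeriodic f (f^[level f v] v) :=
  Nat.sInf_mem (nephew_exists_periodic f v)

lemma nephew_periodic_f {V : Type*} (f : V → V) {w : V} (h : NephewPeriodic f w) :
    NephewPeriodic f (f w) := by
  obtain ⟨k, hk, hw⟩ := h
  exact ⟨k, hk, by rw [← Function.iterate_succ_apply, Function.iterate_succ_apply', hw]⟩

lemma nephew_level_zero {V : Type*} [Finite V] (f : V → V) {v : V}
    (h : NephewPeriodic f v) : level f v = 0 :=
  Nat.sInf_eq_zero.mpr (Or.inl (by simpa using h))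

lemma nephew_not_periodic {V : Type*} [Finite V] (f : V → V) {v : V}
    (h : 1 ≤ level f v) : ¬ NephewPeriodic f v := fun hp => by
  rw [nephew_level_zero f hp] at h; omega

lemma level_succ {V : Type*} [Finite V] (f : V → V) {v : V} (h : ¬ NephewPeriodic f v) :
    level f v = level f (f v) + 1 := by
  have hmem : NephewPeriodic f (f^[level f v] v) := nephew_level_mem f v
  have hpos : level f v ≠ 0 := by
    intro h0
    rw [h0] at hmem
    simp only [Function.iterate_zero_apply] at hmem
    exact h hmem
  obtain ⟨m, hm⟩ := Nat.exists_eq_succ_of_ne_zero hpos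
  have h1 : level f (f v) ≤ m := Nat.sInf_le (by
    have hh : f^[m] (f v) = f^[level f v] v := by
      rw [hm, Function.iterate_succ_apply]
    rw [Set.mem_setOf_eq, hh]; exact hmem)
  have h2 : level f v ≤ level f (f v) + 1 := Nat.sInf_le (by
    rw [Set.mem_setOf_eq, Function.iterate_succ_apply]
    exact nephew_level_mem f (f v))
  omega

/-- If `u` is not a Nephew solution and `level u ≥ 2`, then
`level (f (g u)) = level u` and `level (g u) = level u + 1`. -/
lemma child_level_s6 {V : Type*} [Finite V] (f g : V → V) (u : V)
    (hu : ¬ NephewSol f g u) (hl : 2 ≤ level f u) :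
    level f (f (g u)) = level f u ∧ level f (g u) = level f u + 1 := by
  rw [NephewSol, not_or, not_not] at hu
  obtain ⟨h1, _⟩ := hu
  have hunp : ¬ NephewPeriodic f u := nephew_not_periodic f (by omega)
  have hlev1 : level f u = level f (f u) + 1 := level_succ f hunp
  have hfunp : ¬ NephewPeriodic f (f u) := nephew_not_periodic f (by omega)
  have hfgunp : ¬ NephewPeriodic f (f (g u)) := fun hp => by
    have := nephew_periodic_f f hp
    rw [h1] at this
    exact hfunp this
  have hgunp : ¬ NephewPeriodic f (g u) := fun hp => hfgunp (nephew_periodic_f f hp)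
  have e1 : level f (f (g u)) = level f (f (f (g u))) + 1 := level_succ f hfgunp
  have e2 : level f (g u) = level f (f (g u)) + 1 := level_succ f hgunp
  rw [h1] at e1
  constructor <;> omega

lemma nephew_level_ge {V : Type*} [Finite V] (f g : V → V) (vstar : V)
    (hv : 2 ≤ level f vstar) :
    ∀ u : V, InVStar f g vstar u → level f vstar ≤ level f u := by
  intro u h
  induction h with
  | base => exact le_refl _
  | @left p hp he ih =>
    have := (child_level_s6 f g p he.1 (hv.trans ih)).2
    omega
  | @right p hp he ih =>
    have h1 := (child_level_s6 f g p he.1 (hv.trans ih)).1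
    have h2 := (child_level_s6 f g (f (g p)) he.2.2.1 (by omega)).2
    omega

/-- Children have level = parent's level + 1, and `f ∘ f` of a child is `f` of the parent. -/
lemma child_facts {V : Type*} [Finite V] (f g : V → V) (vstar : V)
    (hv : 2 ≤ level f vstar) {p : V} (hp : InVStar f g vstar p) (he : Expands f g p) :
    level f (g p) = level f p + 1 ∧ f (f (g p)) = f p ∧
    level f (g (f (g p))) = level f p + 1 ∧ f (f (g (f (g p)))) = f p ∧
    f (g (f (g p))) ≠ f (g p) := by
  have hlp : 2 ≤ level f p := hv.trans (nephew_level_ge f g vstar hv p hp)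
  have c1 := child_level_s6 f g p he.1 hlp
  have h1 : f (f (g p)) = f p := by
    have := he.1; rw [NephewSol, not_or, not_not] at this; exact this.1
  have hfgp := he.2.2.1
  rw [NephewSol, not_or, not_not] at hfgp
  have c2 := child_level_s6 f g (f (g p)) he.2.2.1 (by omega)
  refine ⟨c1.2, h1, ?_, ?_, hfgp.2⟩
  · omega
  · rw [hfgp.1, h1]

lemma nephew_parent_exists {V : Type*} (f g : V → V) (vstar u : V)
    (h : InVStar f g vstar u) :
    u = vstar ∨ ∃ p, InVStar f g vstar p ∧ Expands f g p ∧ (u = g p ∨ u = g (f (g p))) := by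
  induction h with
  | base => exact Or.inl rfl
  | @left p hp he _ => exact Or.inr ⟨p, hp, he, Or.inl rfl⟩
  | @right p hp he _ => exact Or.inr ⟨p, hp, he, Or.inr rfl⟩

/-- `f` is injective on `V*`. -/
lemma nephew_f_inj {V : Type*} [Finite V] (f g : V → V) (vstar : V)
    (hv : 2 ≤ level f vstar) :
    ∀ n : ℕ, ∀ w w' : V, InVStar f g vstar w → InVStar f g vstar w' →
      f w = f w' → level f w = n → w = w' := by
  intro n
  induction n using Nat.strong_induction_on with
  | _ n ih =>
    intro w w' hw hw' hf hlev
    have hlw : 2 ≤ level f w := hv.trans (nephew_level_ge f g vstar hv w hw)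
    have hlw' : 2 ≤ level f w' := hv.trans (nephew_level_ge f g vstar hv w' hw')
    have hwlev : level f w = level f w' := by
      rw [level_succ f (nephew_not_periodic f (by omega : 1 ≤ level f w)),
          level_succ f (nephew_not_periodic f (by omega : 1 ≤ level f w')), hf]
    rcases nephew_parent_exists f g vstar w hw with h | ⟨p, hp, hep, hcp⟩
    · rcases nephew_parent_exists f g vstar w' hw' with h' | ⟨p', hp', hep', hcp'⟩
      · rw [h, h']
      · exfalso
        have cf := child_facts f g vstar hv hp' hep'
        have hlp' : level f vstar ≤ level f p' :=
          nephew_level_ge f g vstar hv p' hp'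
        have : level f w' = level f p' + 1 := by
          rcases hcp' with h1 | h1 <;> rw [h1] <;> [exact cf.1; exact cf.2.2.1]
        rw [h] at hwlev
        omega
    · rcases nephew_parent_exists f g vstar w' hw' with h' | ⟨p', hp', hep', hcp'⟩
      · exfalso
        have cf := child_facts f g vstar hv hp hep
        have hlp : level f vstar ≤ level f p := nephew_level_ge f g vstar hv p hp
        have : level f w = level f p + 1 := by
          rcases hcp with h1 | h1 <;> rw [h1] <;> [exact cf.1; exact cf.2.2.1]
        rw [h'] at hwlev
        omega
      · have cf := child_facts f g vstar hv hp hep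
        have cf' := child_facts f g vstar hv hp' hep'
        have hfp : f (f w) = f p := by
          rcases hcp with h1 | h1 <;> rw [h1] <;> [exact cf.2.1; exact cf.2.2.2.1]
        have hfp' : f (f w') = f p' := by
          rcases hcp' with h1 | h1 <;> rw [h1] <;> [exact cf'.2.1; exact cf'.2.2.2.1]
        have hlevw : level f w = level f p + 1 := by
          rcases hcp with h1 | h1 <;> rw [h1] <;> [exact cf.1; exact cf.2.2.1]
        have hpp' : p = p' := by
          refine ih (level f p) (by omega) p p' hp hp' ?_ rfl
          rw [← hfp, ← hfp', hf]
        subst hpp'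
        rcases hcp with h1 | h1 <;> rcases hcp' with h2 | h2
        · rw [h1, h2]
        · exfalso; rw [h1, h2] at hf; exact cf.2.2.2.2 hf.symm
        · exfalso; rw [h1, h2] at hf; exact cf.2.2.2.2 hf
        · rw [h1, h2]

/-- If `ℓ_f(v*) ≥ 2`, then the induced graph on `V*` is a binary tree rooted at `v*`:
(a) `v*` is not a child of any expanding `w ∈ V*`; (b) every `u ∈ V*` other than `v*`
is a child of exactly one expanding `w ∈ V*`; and (c) every expanding `u ∈ V*` has
two distinct children. -/
theorem VStar_is_tree {V : Type*} [Finite V] (f g : V → V) (vstar : V)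
    (hv : 2 ≤ level f vstar) :
    (¬ ∃ w : V, InVStar f g vstar w ∧ Expands f g w ∧
        (vstar = g w ∨ vstar = g (f (g w)))) ∧
    (∀ u : V, InVStar f g vstar u → u ≠ vstar →
      ∃! w : V, InVStar f g vstar w ∧ Expands f g w ∧
        (u = g w ∨ u = g (f (g w)))) ∧
    (∀ u : V, InVStar f g vstar u → Expands f g u → g u ≠ g (f (g u))) := by
  refine ⟨?_, ?_, ?_⟩
  · rintro ⟨w, hw, he, hch⟩
    have cf := child_facts f g vstar hv hw he
    have hlw : level f vstar ≤ level f w := nephew_level_ge f g vstar hv w hw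
    have : level f vstar = level f w + 1 := by
      rcases hch with h1 | h1 <;> rw [h1] <;> [exact cf.1; exact cf.2.2.1]
    omega
  · intro u hu hne
    rcases nephew_parent_exists f g vstar u hu with h | ⟨p, hp, hep, hcp⟩
    · exact absurd h hne
    · refine ⟨p, ⟨hp, hep, hcp⟩, ?_⟩
      rintro w' ⟨hw', hew', hcw'⟩
      have cf := child_facts f g vstar hv hp hep
      have cf' := child_facts f g vstar hv hw' hew'
      have hfp : f (f u) = f p := by
        rcases hcp with h1 | h1 <;> rw [h1] <;> [exact cf.2.1; exact cf.2.2.2.1]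
      have hfw' : f (f u) = f w' := by
        rcases hcw' with h1 | h1 <;> rw [h1] <;> [exact cf'.2.1; exact cf'.2.2.2.1]
      exact nephew_f_inj f g vstar hv (level f w') w' p hw' hp (by rw [← hfp, ← hfw']) rfl
  · intro u _ he
    have hfgu := he.2.2.1
    rw [NephewSol, not_or, not_not] at hfgu
    intro heq
    exact hfgu.2 (by rw [← heq])
end

section
/- Let V be a set, f, g : V → V, and finv : V → Option V. Suppose v ∈ V satisfies finv(v) = some v′, and suppose none of v, v′, f(g(v′)) is a Nephew-with-Inverse solution for (f, finv, g). Put a := f(g(v′)) and b := f(g(a)). Then a ≠ b and f(a) = f(b) = v. -/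
/-- An element `u` is a *Nephew-with-Inverse solution* for `(f, finv, g)` if
`f (f (g u)) ≠ f u`, or `f (g u) = u`, or `finv u = some w` with `f w ≠ u`, or
`finv u = none` and `f (f u) ≠ f u`. -/
def NephewInvSol {V : Type*} (f : V → V) (finv : V → Option V) (g : V → V)
    (u : V) : Prop :=
  f (f (g u)) ≠ f u ∨ f (g u) = u ∨
  (∃ w : V, finv u = some w ∧ f w ≠ u) ∨
  (finv u = none ∧ f (f u) ≠ f u)

/-- Properties of the children produced by `FindChildrenAndParent`: if
`finv v = some v'` and none of `v`, `v'`, `f (g v')` is a Nephew-with-Inverse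
solution, then with `a := f (g v')` and `b := f (g a)` we have `a ≠ b` and
`f a = f b = v`. -/
theorem findChildrenAndParent_properties {V : Type*}
    (f g : V → V) (finv : V → Option V) (v v' : V)
    (hinv : finv v = some v')
    (h0 : ¬ NephewInvSol f finv g v)
    (h1 : ¬ NephewInvSol f finv g v')
    (h2 : ¬ NephewInvSol f finv g (f (g v'))) :
    f (g v') ≠ f (g (f (g v'))) ∧
    f (f (g v')) = v ∧ f (f (g (f (g v')))) = v := by
  simp only [NephewInvSol, not_or, not_exists, not_and, ne_eq, not_not] at h0 h1 h2
  have hfv' : f v' = v := h0.2.2.1 v' hinv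
  have hfa : f (f (g v')) = v := by rw [h1.1, hfv']
  refine ⟨fun h => h2.2.1 h.symm, hfa, ?_⟩
  rw [h2.1, hfa]
end

section
/- Let V be a set with a distinguished element 1 and let F, L, R : V → V. Say ECsol(u) holds if F(L(u)) ≠ u, or F(R(u)) ≠ u, or (L(u) = R(u) and L(u) ≠ u); say WrongRoot holds if L(1) = 1 or R(1) = 1 or F(1) ≠ 1. Define f, g : V × {0,1} → V × {0,1} by: if ECsol(v) holds, then f(v,i) = g(v,i) = (v,i); else if v = 1 and WrongRoot holds, then f(1,i) = g(1,i) = (1,i); else if F(v) = L(v) = R(v) = v, then f(v,i) = (1,0) and g(v,i) = (v, 1−i); else set f(v,i) := (1,0) if v = 1, f(v,i) := (F(v), 1) if v ≠ 1 and v = R(F(v)), and f(v,i) := (F(v), 0) otherwise, and set g(1,0) := (L(L(1)), 0), g(1,1) := (1,1), g(v,0) := (R(v), 0) for v ≠ 1, and g(v,1) := (L(v), 0) for v ≠ 1. Then for every (v,i) ∈ V × {0,1}: if f(f(g(v,i))) ≠ f(v,i) or f(g(v,i)) = (v,i), then WrongRoot holds or at least one of v, L(v), R(v), L(L(1)) satisfies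 ECsol. (Correctness of the reduction from Empty-Child to Nephew.) -/
/-- `u` is an Empty-Child solution: `F (L u) ≠ u`, or `F (R u) ≠ u`, or
`L u = R u` with `L u ≠ u`. -/
def ECsol {V : Type*} (F L R : V → V) (u : V) : Prop :=
  F (L u) ≠ u ∨ F (R u) ≠ u ∨ (L u = R u ∧ L u ≠ u)

/-- The root `one` is wrong: `L one = one`, or `R one = one`, or `F one ≠ one`. -/
def WrongRoot {V : Type*} (one : V) (F L R : V → V) : Prop :=
  L one = one ∨ R one = one ∨ F one ≠ one

open Classical in
/-- The function `f` of the Nephew instance produced by `EmptyChildReduction`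
(`false` plays the role of `0` and `true` of `1`). -/
noncomputable def nephF {V : Type*} (one : V) (F L R : V → V) :
    V × Bool → V × Bool := fun p =>
  if ECsol F L R p.1 then p
  else if p.1 = one ∧ WrongRoot one F L R then p
  else if F p.1 = p.1 ∧ L p.1 = p.1 ∧ R p.1 = p.1 then (one, false)
  else if p.1 = one then (one, false)
  else if p.1 = R (F p.1) then (F p.1, true)
  else (F p.1, false)

open Classical in
/-- The function `g` of the Nephew instance produced by `EmptyChildReduction`. -/
noncomputable def nephG {V : Type*} (one : V) (F L R : V → V) :
    V × Bool → V × Bool := fun p =>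
  if ECsol F L R p.1 then p
  else if p.1 = one ∧ WrongRoot one F L R then p
  else if F p.1 = p.1 ∧ L p.1 = p.1 ∧ R p.1 = p.1 then (p.1, !p.2)
  else if p.1 = one ∧ p.2 = false then (L (L one), false)
  else if p.1 = one then (one, true)
  else if p.2 = false then (R p.1, false)
  else (L p.1, false)

/-- **Correctness of the reduction from Empty-Child to Nephew.** If `(v, i)` is a
Nephew solution of the instance `(nephF, nephG)`, then the root is wrong or one of
`v`, `L v`, `R v`, `L (L one)` is an Empty-Child solution. -/
theorem emptyChild_to_nephew {V : Type*} (one : V) (F L R : V → V)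
    (v : V) (i : Bool)
    (h : nephF one F L R (nephF one F L R (nephG one F L R (v, i)))
           ≠ nephF one F L R (v, i)
         ∨ nephF one F L R (nephG one F L R (v, i)) = (v, i)) :
    WrongRoot one F L R ∨ ECsol F L R v ∨ ECsol F L R (L v) ∨
    ECsol F L R (R v) ∨ ECsol F L R (L (L one)) := by
  by_contra hc
  push_neg at hc
  obtain ⟨hW, hv, hLv, hRv, hLL⟩ := hc
  have hW' := hW
  rw [WrongRoot] at hW'
  push_neg at hW'
  obtain ⟨hL1, hR1, hF1⟩ := hW'
  -- facts from non-solutions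
  have fac : ∀ u, ¬ ECsol F L R u →
      F (L u) = u ∧ F (R u) = u ∧ (L u = R u → L u = u) := by
    intro u hu
    rw [ECsol] at hu
    push_neg at hu
    tauto
  obtain ⟨ev1, ev2, ev3⟩ := fac v hv
  -- evaluation lemmas
  have hnot2 : ∀ u : V, ¬ (u = one ∧ WrongRoot one F L R) := fun u ⟨_, w⟩ => hW w
  have fone' : nephF one F L R (one, false) = (one, false) := by
    simp only [nephF]
    by_cases h1 : ECsol F L R one
    · rw [if_pos h1]
    rw [if_neg h1, if_neg (hnot2 one)]
    by_cases h2 : F one = one ∧ L one = one ∧ R one = one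
    · rw [if_pos h2]
    rw [if_neg h2]
    simp
  have foneE : ∀ b : Bool, ¬ ECsol F L R one →
      nephF one F L R (one, b) = (one, false) := by
    intro b h1
    have hnl : ¬ (F one = one ∧ L one = one ∧ R one = one) := fun ⟨_, e, _⟩ => hL1 e
    simp only [nephF]
    rw [if_neg h1, if_neg (hnot2 one), if_neg hnl]
    simp
  have fvalA : ∀ (u : V) (b : Bool), ¬ ECsol F L R u →
      (F u = u ∧ L u = u ∧ R u = u) → nephF one F L R (u, b) = (one, false) := by
    intro u b h1 h2
    simp only [nephF]
    rw [if_neg h1, if_neg (hnot2 u), if_pos h2]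
  have fvalC : ∀ (u : V) (b : Bool), ¬ ECsol F L R u →
      ¬ (F u = u ∧ L u = u ∧ R u = u) → u ≠ one → u = R (F u) →
      nephF one F L R (u, b) = (F u, true) := by
    intro u b h1 h2 h3 h4
    simp only [nephF]
    rw [if_neg h1, if_neg (hnot2 u), if_neg h2, if_neg h3, if_pos h4]
  have fvalD : ∀ (u : V) (b : Bool), ¬ ECsol F L R u →
      ¬ (F u = u ∧ L u = u ∧ R u = u) → u ≠ one → u ≠ R (F u) →
      nephF one F L R (u, b) = (F u, false) := by
    intro u b h1 h2 h3 h4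
    simp only [nephF]
    rw [if_neg h1, if_neg (hnot2 u), if_neg h2, if_neg h3, if_neg h4]
  have gvalA : ∀ (u : V) (b : Bool), ¬ ECsol F L R u →
      (F u = u ∧ L u = u ∧ R u = u) → nephG one F L R (u, b) = (u, !b) := by
    intro u b h1 h2
    simp only [nephG]
    rw [if_neg h1, if_neg (hnot2 u), if_pos h2]
  have gvalB0 : ¬ ECsol F L R one →
      nephG one F L R (one, false) = (L (L one), false) := by
    intro h1
    have hnl : ¬ (F one = one ∧ L one = one ∧ R one = one) := fun ⟨_, e, _⟩ => hL1 e
    simp only [nephG]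
    rw [if_neg h1, if_neg (hnot2 one), if_neg hnl]
    simp
  have gvalB1 : ¬ ECsol F L R one → nephG one F L R (one, true) = (one, true) := by
    intro h1
    have hnl : ¬ (F one = one ∧ L one = one ∧ R one = one) := fun ⟨_, e, _⟩ => hL1 e
    simp only [nephG]
    rw [if_neg h1, if_neg (hnot2 one), if_neg hnl]
    simp
  have gvalC : ∀ u : V, ¬ ECsol F L R u → ¬ (F u = u ∧ L u = u ∧ R u = u) →
      u ≠ one → nephG one F L R (u, false) = (R u, false) := by
    intro u h1 h2 h3
    simp only [nephG]
    rw [if_neg h1, if_neg (hnot2 u), if_neg h2]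
    simp [h3]
  have gvalD : ∀ u : V, ¬ ECsol F L R u → ¬ (F u = u ∧ L u = u ∧ R u = u) →
      u ≠ one → nephG one F L R (u, true) = (L u, false) := by
    intro u h1 h2 h3
    simp only [nephG]
    rw [if_neg h1, if_neg (hnot2 u), if_neg h2]
    simp [h3]
  -- main case analysis
  by_cases hvo : v = one
  · subst hvo
    have hnleaf : ¬ (F v = v ∧ L v = v ∧ R v = v) := fun ⟨_, h2, _⟩ => hL1 h2
    cases i with
    | true =>
      rw [gvalB1 hv, foneE true hv, fone'] at h
      rcases h with h | h
      · exact h rfl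
      · exact absurd (congrArg Prod.snd h) (by simp)
    | false =>
      obtain ⟨eL1, eL2, eL3⟩ := fac (L v) hLv
      set w := L (L v) with hwdef
      have hFw : F w = L v := eL1
      have hwone : w ≠ v := by
        intro e
        exact hL1 (by rw [← hFw, e, hF1])
      have hwL : w ≠ L v := by
        intro e
        exact hL1 (by rw [← hFw, e, ev1])
      have hwR : w ≠ R (L v) := by
        intro e
        exact hwL (eL3 e)
      have hwnleaf : ¬ (F w = w ∧ L w = w ∧ R w = w) := by
        intro ⟨h1, _, _⟩
        rw [hFw] at h1
        exact hwL h1.symm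
      have hLvone : L v ≠ v := hL1
      have hLvnleaf : ¬ (F (L v) = L v ∧ L (L v) = L v ∧ R (L v) = L v) := by
        intro ⟨h1, _, _⟩
        rw [ev1] at h1
        exact hL1 h1.symm
      have hLvR : L v ≠ R (F (L v)) := by
        rw [ev1]
        intro e
        exact hL1 (ev3 e)
      rw [gvalB0 hv, fvalD w false hLL hwnleaf hwone (by rw [hFw]; exact hwR),
        hFw, fvalD (L v) false hLv hLvnleaf hLvone hLvR, ev1, fone'] at h
      rcases h with h | h
      · exact h rfl
      · exact absurd (congrArg Prod.fst h) hL1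
  · by_cases hlf : F v = v ∧ L v = v ∧ R v = v
    · -- leaf case
      rw [gvalA v i hv hlf, fvalA v (!i) hv hlf, fvalA v i hv hlf, fone'] at h
      rcases h with h | h
      · exact h rfl
      · exact absurd (congrArg Prod.fst h) (fun e => hvo e.symm)
    · -- internal node
      have hLR : L v ≠ R v := by
        intro e
        have h1 : L v = v := ev3 e
        have h2 := ev1
        rw [h1] at h2
        exact hlf ⟨h2, h1, by rw [← e, h1]⟩
      cases i with
      | false =>
        set u := R v with hudef
        have hFu : F u = v := ev2
        have huone : u ≠ one := by
          intro e
          exact hvo (by rw [← hFu, e, hF1])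
        have hunleaf : ¬ (F u = u ∧ L u = u ∧ R u = u) := by
          intro ⟨h1, h2, h3⟩
          have hvu : v = u := by rw [← hFu, h1]
          exact hlf (by rw [hvu]; exact ⟨h1, h2, rfl⟩)
        have huR : u = R (F u) := by rw [hFu]
        rw [gvalC v hv hlf hvo, fvalC u false hRv hunleaf huone huR, hFu] at h
        rcases h with h | h
        · -- need nephF (v,true) = nephF (v,false)
          apply h
          by_cases hvR : v = R (F v)
          · rw [fvalC v true hv hlf hvo hvR, fvalC v false hv hlf hvo hvR]
          · rw [fvalD v true hv hlf hvo hvR, fvalD v false hv hlf hvo hvR]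
        · exact absurd (congrArg Prod.snd h) (by simp)
      | true =>
        set u := L v with hudef
        have hFu : F u = v := ev1
        have huone : u ≠ one := by
          intro e
          exact hvo (by rw [← hFu, e, hF1])
        have hunleaf : ¬ (F u = u ∧ L u = u ∧ R u = u) := by
          intro ⟨h1, h2, h3⟩
          have hvu : v = u := by rw [← hFu, h1]
          exact hLR (by rw [hvu, h3])
        have huR : u ≠ R (F u) := by rw [hFu]; exact hLR
        rw [gvalD v hv hlf hvo, fvalD u false hLv hunleaf huone huR, hFu] at h
        rcases h with h | h
        · apply h
          by_cases hvR : v = R (F v)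
          · rw [fvalC v false hv hlf hvo hvR, fvalC v true hv hlf hvo hvR]
          · rw [fvalD v false hv hlf hvo hvR, fvalD v true hv hlf hvo hvR]
        · exact absurd (congrArg Prod.snd h) (by simp)
end

section
/- Let n ≥ 1, N := 2^n, and let f : [N] → [2N] and g : [2N] → [N] be functions (where [k] = {1, …, k}). Let W := {(i,j) : 1 ≤ i ≤ 2n, 1 ≤ j ≤ 2^{i−1}} ∪ {(i,j) : 2n < i ≤ 2n + 2N, 1 ≤ j ≤ N}, and define F, L, R : W → W by: F(1,1) := (1,1); F(i,j) := (i−1, ⌈j/2⌉) for 2 ≤ i ≤ 2n; F(i+2n, j) := (f(i)+2n, ⌈f(j)/2⌉) for 1 ≤ i ≤ N and j ∈ [N]; F(i+2n+N, j) := (2n, ⌈((i−1)·N + j)/2⌉) for 1 ≤ i ≤ N and j ∈ [N]; L(i,j) := (i+1, 2j−1) and R(i,j) := (i+1, 2j) for 1 ≤ i ≤ 2n−1 and j ∈ [2^{i−1}]; L(2n, (i−1)·N/2 + j) := (i+2n+N, 2j−1) and R(2n, (i−1)·N/2 + j) := (i+2n+N, 2j) for i ∈ [N] and j ∈ [N/2];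 and L(i+2n, j) := (g(i)+2n, g(2j−1)) and R(i+2n, j) := (g(i)+2n, g(2j)) for i ∈ [2N] and j ∈ [N]. Then for every (i′, j) ∈ W: if F(L(i′,j)) ≠ (i′,j), or F(R(i′,j)) ≠ (i′,j), or (L(i′,j) = R(i′,j) and L(i′,j) ≠ (i′,j)), then i′ > 2n and, writing i := i′ − 2n, at least one of f(g(i)) ≠ i, f(g(2j−1)) ≠ 2j−1, f(g(2j)) ≠ 2j holds. (Correctness of the reduction from Lossy-Code to Empty-Child.) -/
/-- The vertex set `W` of the tree built from a Lossy-Code instance: the first `2n`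
levels form a complete binary tree (level `i` has `2^(i-1)` vertices) and the
remaining `2N` levels each contain `N` vertices. -/
def memW (n N : ℕ) (p : ℕ × ℕ) : Prop :=
  (1 ≤ p.1 ∧ p.1 ≤ 2 * n ∧ 1 ≤ p.2 ∧ p.2 ≤ 2 ^ (p.1 - 1)) ∨
  (2 * n < p.1 ∧ p.1 ≤ 2 * n + 2 * N ∧ 1 ≤ p.2 ∧ p.2 ≤ N)

/-- The father function of the tree: `F (1,1) = (1,1)`; `F (i,j) = (i-1, ⌈j/2⌉)` for
`2 ≤ i ≤ 2n`; `F (i+2n, j) = (f i + 2n, ⌈f j / 2⌉)` for `1 ≤ i ≤ N`; and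
`F (i+2n+N, j) = (2n, ⌈((i-1)·N + j)/2⌉)` for `1 ≤ i ≤ N`. -/
def lcF (n N : ℕ) (f : ℕ → ℕ) (p : ℕ × ℕ) : ℕ × ℕ :=
  if p.1 ≤ 1 then (1, 1)
  else if p.1 ≤ 2 * n then (p.1 - 1, (p.2 + 1) / 2)
  else if p.1 ≤ 2 * n + N then (f (p.1 - 2 * n) + 2 * n, (f p.2 + 1) / 2)
  else (2 * n, ((p.1 - 2 * n - N - 1) * N + p.2 + 1) / 2)

/-- The left-child function: `L (i,j) = (i+1, 2j-1)` for `1 ≤ i ≤ 2n-1`;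
`L (2n, (i-1)·N/2 + j) = (i+2n+N, 2j-1)` for `i ∈ [N]`, `j ∈ [N/2]`; and
`L (i+2n, j) = (g i + 2n, g (2j-1))` for `i ∈ [2N]`. -/
def lcL (n N : ℕ) (g : ℕ → ℕ) (p : ℕ × ℕ) : ℕ × ℕ :=
  if p.1 < 2 * n then (p.1 + 1, 2 * p.2 - 1)
  else if p.1 = 2 * n then
    ((p.2 - 1) / (N / 2) + 1 + 2 * n + N, 2 * ((p.2 - 1) % (N / 2) + 1) - 1)
  else (g (p.1 - 2 * n) + 2 * n, g (2 * p.2 - 1))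

/-- The right-child function: `R (i,j) = (i+1, 2j)` for `1 ≤ i ≤ 2n-1`;
`R (2n, (i-1)·N/2 + j) = (i+2n+N, 2j)` for `i ∈ [N]`, `j ∈ [N/2]`; and
`R (i+2n, j) = (g i + 2n, g (2j))` for `i ∈ [2N]`. -/
def lcR (n N : ℕ) (g : ℕ → ℕ) (p : ℕ × ℕ) : ℕ × ℕ :=
  if p.1 < 2 * n then (p.1 + 1, 2 * p.2)
  else if p.1 = 2 * n then
    ((p.2 - 1) / (N / 2) + 1 + 2 * n + N, 2 * ((p.2 - 1) % (N / 2) + 1))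
  else (g (p.1 - 2 * n) + 2 * n, g (2 * p.2))

/-- **Correctness of the reduction from Lossy-Code to Empty-Child.** If a vertex
`(i', j)` of `W` has an empty child, then `i' > 2n` and, with `i := i' - 2n`, one
of `f (g i) ≠ i`, `f (g (2j-1)) ≠ 2j-1`, `f (g (2j)) ≠ 2j` holds, i.e., we obtain
a Lossy-Code solution. -/
theorem lossyCode_to_emptyChild (n N : ℕ) (hn : 1 ≤ n) (hN : N = 2 ^ n)
    (f g : ℕ → ℕ)
    (hf : ∀ i : ℕ, 1 ≤ i → i ≤ N → 1 ≤ f i ∧ f i ≤ 2 * N)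
    (hg : ∀ i : ℕ, 1 ≤ i → i ≤ 2 * N → 1 ≤ g i ∧ g i ≤ N)
    (i' j : ℕ) (hW : memW n N (i', j))
    (hsol : lcF n N f (lcL n N g (i', j)) ≠ (i', j)
          ∨ lcF n N f (lcR n N g (i', j)) ≠ (i', j)
          ∨ (lcL n N g (i', j) = lcR n N g (i', j) ∧ lcL n N g (i', j) ≠ (i', j))) :
    2 * n < i' ∧
      (f (g (i' - 2 * n)) ≠ i' - 2 * n ∨
       f (g (2 * j - 1)) ≠ 2 * j - 1 ∨
       f (g (2 * j)) ≠ 2 * j) := by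
  obtain ⟨d, hd, hd1⟩ : ∃ d, N = 2 * d ∧ 1 ≤ d := by
    refine ⟨2 ^ (n - 1), ?_, Nat.one_le_two_pow⟩
    have hn' : 2 ^ n = 2 * 2 ^ (n - 1) := by
      conv_lhs => rw [show n = (n - 1) + 1 by omega]
      rw [pow_succ]; ring
    rw [hN, hn']
  rcases hW with ⟨h1, h2, h3, h4⟩ | ⟨h1, h2, h3, h4⟩
  · exfalso
    rcases Nat.lt_or_ge i' (2 * n) with hlt | hge
    · have hL : lcL n N g (i', j) = (i' + 1, 2 * j - 1) := by simp [lcL, hlt]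
      have hR : lcR n N g (i', j) = (i' + 1, 2 * j) := by simp [lcR, hlt]
      have hFL : lcF n N f (i' + 1, 2 * j - 1) = (i', j) := by
        simp only [lcF]
        rw [if_neg (by omega : ¬ (i' + 1, 2 * j - 1).1 ≤ 1),
          if_pos (by omega : (i' + 1, 2 * j - 1).1 ≤ 2 * n), Prod.mk.injEq]
        omega
      have hFR : lcF n N f (i' + 1, 2 * j) = (i', j) := by
        simp only [lcF]
        rw [if_neg (by omega : ¬ (i' + 1, 2 * j).1 ≤ 1),
          if_pos (by omega : (i' + 1, 2 * j).1 ≤ 2 * n), Prod.mk.injEq]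
        omega
      rcases hsol with h | h | ⟨h, _⟩
      · rw [hL, hFL] at h; exact h rfl
      · rw [hR, hFR] at h; exact h rfl
      · rw [hL, hR, Prod.mk.injEq] at h; omega
    · have hi' : i' = 2 * n := by omega
      subst hi'
      have hN2 : N / 2 = d := by omega
      have hL : lcL n N g (2 * n, j)
          = ((j - 1) / d + 1 + 2 * n + N, 2 * ((j - 1) % d + 1) - 1) := by
        simp [lcL, hN2]
      have hR : lcR n N g (2 * n, j)
          = ((j - 1) / d + 1 + 2 * n + N, 2 * ((j - 1) % d + 1)) := by
        simp [lcR, hN2]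
      have hdm : d * ((j - 1) / d) + (j - 1) % d = j - 1 := Nat.div_add_mod _ _
      obtain ⟨q, hq⟩ : ∃ q, (j - 1) / d = q := ⟨_, rfl⟩
      obtain ⟨r, hr⟩ : ∃ r, (j - 1) % d = r := ⟨_, rfl⟩
      rw [hq, hr] at hL hR hdm
      obtain ⟨X, hX⟩ : ∃ X, d * q = X := ⟨_, rfl⟩
      rw [hX] at hdm
      have hqN : q * N = 2 * X := by rw [hd, ← hX]; ring
      have hFL : lcF n N f (q + 1 + 2 * n + N, 2 * (r + 1) - 1) = (2 * n, j) := by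
        simp only [lcF]
        rw [if_neg (by omega : ¬ (q + 1 + 2 * n + N, 2 * (r + 1) - 1).1 ≤ 1),
          if_neg (by omega : ¬ (q + 1 + 2 * n + N, 2 * (r + 1) - 1).1 ≤ 2 * n),
          if_neg (by omega : ¬ (q + 1 + 2 * n + N, 2 * (r + 1) - 1).1 ≤ 2 * n + N),
          Prod.mk.injEq]
        refine ⟨rfl, ?_⟩
        have h5 : q + 1 + 2 * n + N - 2 * n - N - 1 = q := by omega
        rw [h5, hqN]
        omega
      have hFR : lcF n N f (q + 1 + 2 * n + N, 2 * (r + 1)) = (2 * n, j) := by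
        simp only [lcF]
        rw [if_neg (by omega : ¬ (q + 1 + 2 * n + N, 2 * (r + 1)).1 ≤ 1),
          if_neg (by omega : ¬ (q + 1 + 2 * n + N, 2 * (r + 1)).1 ≤ 2 * n),
          if_neg (by omega : ¬ (q + 1 + 2 * n + N, 2 * (r + 1)).1 ≤ 2 * n + N),
          Prod.mk.injEq]
        refine ⟨rfl, ?_⟩
        have h5 : q + 1 + 2 * n + N - 2 * n - N - 1 = q := by omega
        rw [h5, hqN]
        omega
      rcases hsol with h | h | ⟨h, _⟩
      · rw [hL, hFL] at h; exact h rfl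
      · rw [hR, hFR] at h; exact h rfl
      · rw [hL, hR, Prod.mk.injEq] at h; omega
  · refine ⟨h1, ?_⟩
    by_contra hc
    push_neg at hc
    obtain ⟨e1, e2, e3⟩ := hc
    obtain ⟨hg1, hg2⟩ := hg (i' - 2 * n) (by omega) (by omega)
    obtain ⟨hg3, hg4⟩ := hg (2 * j - 1) (by omega) (by omega)
    obtain ⟨hg5, hg6⟩ := hg (2 * j) (by omega) (by omega)
    have hL : lcL n N g (i', j) = (g (i' - 2 * n) + 2 * n, g (2 * j - 1)) := by
      simp only [lcL]
      rw [if_neg (by omega : ¬ (i', j).1 < 2 * n), if_neg (by omega : ¬ (i', j).1 = 2 * n)]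
    have hR : lcR n N g (i', j) = (g (i' - 2 * n) + 2 * n, g (2 * j)) := by
      simp only [lcR]
      rw [if_neg (by omega : ¬ (i', j).1 < 2 * n), if_neg (by omega : ¬ (i', j).1 = 2 * n)]
    have hFL : lcF n N f (g (i' - 2 * n) + 2 * n, g (2 * j - 1)) = (i', j) := by
      simp only [lcF]
      rw [if_neg (by omega : ¬ (g (i' - 2 * n) + 2 * n, g (2 * j - 1)).1 ≤ 1),
        if_neg (by omega : ¬ (g (i' - 2 * n) + 2 * n, g (2 * j - 1)).1 ≤ 2 * n),
        if_pos (by omega : (g (i' - 2 * n) + 2 * n, g (2 * j - 1)).1 ≤ 2 * n + N),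
        Prod.mk.injEq]
      have h5 : g (i' - 2 * n) + 2 * n - 2 * n = g (i' - 2 * n) := by omega
      rw [h5, e1, e2]
      omega
    have hFR : lcF n N f (g (i' - 2 * n) + 2 * n, g (2 * j)) = (i', j) := by
      simp only [lcF]
      rw [if_neg (by omega : ¬ (g (i' - 2 * n) + 2 * n, g (2 * j)).1 ≤ 1),
        if_neg (by omega : ¬ (g (i' - 2 * n) + 2 * n, g (2 * j)).1 ≤ 2 * n),
        if_pos (by omega : (g (i' - 2 * n) + 2 * n, g (2 * j)).1 ≤ 2 * n + N),
        Prod.mk.injEq]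
      have h5 : g (i' - 2 * n) + 2 * n - 2 * n = g (i' - 2 * n) := by omega
      rw [h5, e1, e3]
      omega
    rcases hsol with h | h | ⟨h, _⟩
    · rw [hL, hFL] at h; exact h rfl
    · rw [hR, hFR] at h; exact h rfl
    · rw [hL, hR, Prod.mk.injEq] at h
      have h6 : f (g (2 * j - 1)) = f (g (2 * j)) := by rw [h.2]
      omega
end

section
/- Let t be a binary tree (with constructors nil and node, each node having a left and a right subtree), and for a list p of booleans let sub(t, p) denote the subtree of t at position p, obtained by repeatedly descending into the left subtree on false and the right subtree on true (with sub(nil, p) = nil). Then for every n ∈ ℕ: 3 · |{p ∈ {false,true}^{n+1} : sub(t, p) is a node whose two immediate subtrees are both nodes}| ≤ numNodes(t), where numNodes(t) is the total number of node constructors in t. Consequently, if numNodes(t) ≤ 2^n, then at most a 1/6 fraction of the 2^{n+1} strings p ∈ {false,true}^{n+1} have the property that sub(t, p) is a node with both immediate subtrees nodes. -/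
/-- The subtree of `t` at position `p`: descend left on `false`, right on `true`. -/
def subAt {α : Type*} : BinaryTree α → List Bool → BinaryTree α
  | t, [] => t
  | BinaryTree.nil, _ :: _ => BinaryTree.nil
  | BinaryTree.node _ l r, b :: p => subAt (if b then r else l) p

/-- `t` is a node whose two immediate subtrees are both nodes. -/
def isBranchy {α : Type*} : BinaryTree α → Bool
  | BinaryTree.node _ (BinaryTree.node _ _ _) (BinaryTree.node _ _ _) => true
  | _ => false

private def cnt {α : Type*} (t : BinaryTree α) (k : ℕ) : ℕ :=
  ((Finset.univ : Finset (Fin k → Bool)).filter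
    (fun x => isBranchy (subAt t (List.ofFn x)) = true)).card

private lemma subAt_nil {α : Type*} (p : List Bool) :
    subAt (BinaryTree.nil : BinaryTree α) p = BinaryTree.nil := by
  cases p <;> rfl

@[simp] private lemma subAt_false {α : Type*} (a : α) (l r : BinaryTree α) :
    subAt (BinaryTree.node a l r) [false] = l := by simp [subAt]

@[simp] private lemma subAt_true {α : Type*} (a : α) (l r : BinaryTree α) :
    subAt (BinaryTree.node a l r) [true] = r := by simp [subAt]

private lemma subAt_cons {α : Type*} (t : BinaryTree α) (b : Bool) (p : List Bool) :
    subAt t (b :: p) = subAt (subAt t [b]) p := by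
  cases t <;> cases b <;> simp [subAt, subAt_nil]

private lemma cnt_succ {α : Type*} (t : BinaryTree α) (k : ℕ) :
    cnt t (k + 1) = cnt (subAt t [false]) k + cnt (subAt t [true]) k := by
  classical
  have key : ∀ (x : Fin (k + 1) → Bool),
      subAt t (List.ofFn x) = subAt (subAt t [x 0]) (List.ofFn (Fin.tail x)) := by
    intro x
    rw [List.ofFn_succ, subAt_cons]
    rfl
  have e : {x : Fin (k + 1) → Bool // isBranchy (subAt t (List.ofFn x)) = true} ≃
      {x : Fin k → Bool // isBranchy (subAt (subAt t [false]) (List.ofFn x)) = true} ⊕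
      {x : Fin k → Bool // isBranchy (subAt (subAt t [true]) (List.ofFn x)) = true} :=
    { toFun := fun x =>
        if h : x.1 0 = true then
          Sum.inr ⟨Fin.tail x.1, by have := x.2; rwa [key, h] at this⟩
        else
          Sum.inl ⟨Fin.tail x.1, by
            have := x.2; rw [key] at this
            rw [Bool.not_eq_true] at h
            rwa [h] at this⟩
      invFun := fun s =>
        match s with
        | Sum.inl z => ⟨Fin.cons false z.1, by
            rw [key]; simpa [Fin.tail_cons] using z.2⟩
        | Sum.inr z => ⟨Fin.cons true z.1, by
            rw [key]; simpa [Fin.tail_cons] using z.2⟩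
      left_inv := by
        rintro ⟨x, hx⟩
        by_cases h : x 0 = true <;> simp [h, Fin.cons_self_tail]
        · rw [← h, Fin.cons_self_tail]
        · rw [show (false : Bool) = x 0 by simp [Bool.not_eq_true] at h; exact h.symm,
            Fin.cons_self_tail]
      right_inv := by
        rintro (⟨z, hz⟩ | ⟨z, hz⟩) <;> simp [Fin.tail_cons] }
  unfold cnt
  rw [← Fintype.card_subtype, ← Fintype.card_subtype, ← Fintype.card_subtype,
    Fintype.card_congr e, Fintype.card_sum]

private lemma cnt_zero {α : Type*} (t : BinaryTree α) :
    cnt t 0 = if isBranchy t = true then 1 else 0 := by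
  classical
  by_cases h : isBranchy t = true <;>
    simp [cnt, subAt, h, Finset.filter_true_of_mem, Finset.filter_false_of_mem]

private lemma branchy_le {α : Type*} (s : BinaryTree α) :
    3 * (if isBranchy s = true then 1 else 0) ≤ s.numNodes := by
  match s with
  | BinaryTree.nil => simp [isBranchy]
  | BinaryTree.node _ BinaryTree.nil _ => simp [isBranchy]
  | BinaryTree.node _ (BinaryTree.node _ _ _) BinaryTree.nil => simp [isBranchy]
  | BinaryTree.node _ (BinaryTree.node _ _ _) (BinaryTree.node _ _ _) =>
      simp [isBranchy, BinaryTree.numNodes]; omega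

private lemma main_bound {α : Type*} (k : ℕ) : ∀ t : BinaryTree α, 3 * cnt t (k + 1) ≤ t.numNodes := by
  induction k with
  | zero =>
      intro t
      rw [cnt_succ, cnt_zero, cnt_zero]
      cases t with
      | nil => simp [subAt, isBranchy]
      | node a l r =>
          have hl := branchy_le l
          have hr := branchy_le r
          simp only [subAt_false, subAt_true, BinaryTree.numNodes]
          omega
  | succ k ih =>
      intro t
      rw [cnt_succ]
      cases t with
      | nil =>
          have := ih (BinaryTree.nil : BinaryTree α)
          simp [subAt_nil, BinaryTree.numNodes] at this ⊢
          omega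
      | node a l r =>
          have hl := ih l
          have hr := ih r
          simp only [subAt_false, subAt_true, BinaryTree.numNodes]
          omega

/-- **Counting fact for random descent in a binary tree.** For every binary tree `t`
and every `n`, three times the number of direction strings `p` of length `n + 1`
such that the subtree of `t` at `p` is a node with both immediate subtrees nodes is
at most the number of nodes of `t`; consequently, if `t` has at most `2 ^ n` nodes,
then at most a `1/6` fraction of the `2 ^ (n + 1)` strings have this property. -/
theorem btree_leaf_counting {α : Type*} (t : BinaryTree α) (n : ℕ) :
    3 * ((Finset.univ : Finset (Fin (n + 1) → Bool)).filter
        (fun x => isBranchy (subAt t (List.ofFn x)) = true)).card ≤ t.numNodes ∧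
    (t.numNodes ≤ 2 ^ n →
      6 * ((Finset.univ : Finset (Fin (n + 1) → Bool)).filter
        (fun x => isBranchy (subAt t (List.ofFn x)) = true)).card ≤ 2 ^ (n + 1)) := by
  have h := main_bound n t
  constructor
  · exact h
  · intro hn
    have : 2 ^ (n + 1) = 2 * 2 ^ n := by ring
    rw [this]
    calc 6 * _ = 2 * (3 * cnt t (n + 1)) := by unfold cnt; ring
      _ ≤ 2 * t.numNodes := by omega
      _ ≤ 2 * 2 ^ n := by omega
end

section
/- Let N ≥ 1, ℓ ≥ 1, and let S_1, …, S_ℓ ⊆ Fin N. Let a_1, …, a_ℓ and a_{i,j} (for 1 ≤ i < j ≤ ℓ) be natural numbers, let e ≥ 1 be a natural number, and assume Σ_{i=1}^ℓ a_i ≥ Σ_{1 ≤ i < j ≤ ℓ} a_{i,j} + e; set m := Σ_i a_i − Σ_{i<j} a_{i,j} − e. Suppose we are given functions f_i : Fin a_i → Fin N and g_i : Fin N → Fin a_i for each i, functions f_{i,j} : Fin a_{i,j} → Fin N and g_{i,j} : Fin N → Fin a_{i,j} for each i < j, and functions f̃ : Fin m → Fin N and g̃ : Fin N → Fin m. Then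 at least one of the following holds: (s1) there exist i and x ∈ Fin a_i with f_i(x) ∉ S_i or g_i(f_i(x)) ≠ x; (s2) there exist i < j and y ∈ S_i ∩ S_j with f_{i,j}(g_{i,j}(y)) ≠ y; (s3) there exists y ∈ S_1 ∪ ⋯ ∪ S_ℓ with f̃(g̃(y)) ≠ y. (Totality of the Inclusion-Exclusion search problem.) -/
open Finset in
/-- **Totality of the Inclusion-Exclusion search problem.** Given sets
`S i ⊆ Fin N`, estimates `a i` for `|S i|` and `a2 i j` for `|S i ∩ S j|`
(`i < j`), a margin `e ≥ 1` with `∑ a i ≥ ∑_{i<j} a2 i j + e`, and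
injection–surjection pairs certifying `a i ≤ |S i|`, `|S i ∩ S j| ≤ a2 i j`,
and `|⋃ S i| ≤ m := ∑ a i − ∑_{i<j} a2 i j − e`, one of the certificates fails. -/
theorem inclusion_exclusion_total (N ℓ : ℕ) (hN : 1 ≤ N) (hℓ : 1 ≤ ℓ)
    (S : Fin ℓ → Set (Fin N))
    (a : Fin ℓ → ℕ) (a2 : Fin ℓ → Fin ℓ → ℕ) (e : ℕ) (he : 1 ≤ e)
    (hsum : (∑ p ∈ univ.filter (fun p : Fin ℓ × Fin ℓ => p.1 < p.2), a2 p.1 p.2) + e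
              ≤ ∑ i : Fin ℓ, a i)
    (f1 : ∀ i : Fin ℓ, Fin (a i) → Fin N)
    (g1 : ∀ i : Fin ℓ, Fin N → Fin (a i))
    (f2 : ∀ i j : Fin ℓ, i < j → Fin (a2 i j) → Fin N)
    (g2 : ∀ i j : Fin ℓ, i < j → Fin N → Fin (a2 i j))
    (ft : Fin ((∑ i : Fin ℓ, a i) -
            (∑ p ∈ univ.filter (fun p : Fin ℓ × Fin ℓ => p.1 < p.2), a2 p.1 p.2) - e)
          → Fin N)
    (gt : Fin N →
          Fin ((∑ i : Fin ℓ, a i) -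
            (∑ p ∈ univ.filter (fun p : Fin ℓ × Fin ℓ => p.1 < p.2), a2 p.1 p.2) - e)) :
    (∃ i : Fin ℓ, ∃ x : Fin (a i), f1 i x ∉ S i ∨ g1 i (f1 i x) ≠ x) ∨
    (∃ i j : Fin ℓ, ∃ hij : i < j, ∃ y : Fin N,
        y ∈ S i ∧ y ∈ S j ∧ f2 i j hij (g2 i j hij y) ≠ y) ∨
    (∃ y : Fin N, (∃ i : Fin ℓ, y ∈ S i) ∧ ft (gt y) ≠ y) := by
  classical
  by_contra hcon
  push_neg at hcon
  obtain ⟨h1, h2, h3⟩ := hcon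
  -- (3) |U| ≤ m  (do this first, before abstracting the sums)
  have hUcard : (univ.filter (fun y : Fin N => ∃ i, y ∈ S i)).card
      ≤ (∑ i : Fin ℓ, a i) -
          (∑ p ∈ univ.filter (fun p : Fin ℓ × Fin ℓ => p.1 < p.2), a2 p.1 p.2) - e := by
    have := Finset.card_le_card_of_injOn
      (s := univ.filter (fun y : Fin N => ∃ i, y ∈ S i)) (t := univ) gt
      (fun y _ => Finset.mem_univ _)
      (fun y hy z hz hyz => by
        simp only [Finset.mem_coe, mem_filter, mem_univ, true_and] at hy hz
        have hy' := h3 y hy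
        have hz' := h3 z hz
        rw [← hy', ← hz', hyz])
    simpa using this
  clear h3 ft gt
  set A := ∑ i : Fin ℓ, a i with hA
  set B := ∑ p ∈ univ.filter (fun p : Fin ℓ × Fin ℓ => p.1 < p.2), a2 p.1 p.2 with hB
  set P := univ.filter (fun p : Fin ℓ × Fin ℓ => p.1 < p.2) with hP
  set T : Fin ℓ → Finset (Fin N) := fun i => univ.filter (fun y => y ∈ S i) with hT
  set U : Finset (Fin N) := univ.filter (fun y => ∃ i, y ∈ S i) with hU
  -- (1) a i ≤ |T i|
  have hTcard : ∀ i, a i ≤ (T i).card := by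
    intro i
    have := Finset.card_le_card_of_injOn (s := univ) (t := T i) (f1 i)
      (fun x _ => by simp only [hT, Finset.mem_coe, mem_filter, mem_univ, true_and]; exact (h1 i x).1)
      (fun x _ y _ hxy => by
        have := congrArg (g1 i) hxy
        rwa [(h1 i x).2, (h1 i y).2] at this)
    simpa using this
  -- (2) |T i ∩ T j| ≤ a2 i j for i < j
  have hIcard : ∀ p ∈ P, ((T p.1) ∩ (T p.2)).card ≤ a2 p.1 p.2 := by
    intro p hp
    have hij : p.1 < p.2 := by simpa [hP] using hp
    have := Finset.card_le_card_of_injOn (s := (T p.1) ∩ (T p.2)) (t := univ)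
      (g2 p.1 p.2 hij) (fun y _ => Finset.mem_univ _)
      (fun y hy z hz hyz => by
        simp only [Finset.mem_coe, mem_inter, hT, mem_filter, mem_univ, true_and] at hy hz
        have hy' := h2 p.1 p.2 hij y hy.1 hy.2
        have hz' := h2 p.1 p.2 hij z hz.1 hz.2
        rw [← hy', ← hz', hyz])
    simpa using this
  -- double counting: ∑ |T i| = ∑_y t y
  have hswap1 : ∑ i, (T i).card = ∑ y : Fin N, (univ.filter (fun i => y ∈ S i)).card := by
    simp only [hT, Finset.card_filter]
    exact Finset.sum_comm
  have hswap2 : ∑ p ∈ P, ((T p.1) ∩ (T p.2)).card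
      = ∑ y : Fin N, (P.filter (fun p => y ∈ S p.1 ∧ y ∈ S p.2)).card := by
    have hinter : ∀ p : Fin ℓ × Fin ℓ, (T p.1) ∩ (T p.2)
        = univ.filter (fun y => y ∈ S p.1 ∧ y ∈ S p.2) := by
      intro p; ext y; simp [hT]
    simp only [hinter, Finset.card_filter]
    exact Finset.sum_comm
  -- pointwise Bonferroni
  have hpt : ∀ y : Fin N, (univ.filter (fun i => y ∈ S i)).card
      ≤ (if (∃ i, y ∈ S i) then 1 else 0)
        + (P.filter (fun p => y ∈ S p.1 ∧ y ∈ S p.2)).card := by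
    intro y
    set F : Finset (Fin ℓ) := univ.filter (fun i => y ∈ S i) with hF
    by_cases hFe : F = ∅
    · simp [hFe]
    · have hne : F.Nonempty := Finset.nonempty_of_ne_empty hFe
      have hmin : F.min' hne ∈ F := Finset.min'_mem F hne
      set m0 := F.min' hne with hm0
      have hEx : ∃ i, y ∈ S i := ⟨m0, by simpa [hF] using hmin⟩
      rw [if_pos hEx]
      have hinj : (F.erase m0).card ≤ (P.filter (fun p => y ∈ S p.1 ∧ y ∈ S p.2)).card := by
        apply Finset.card_le_card_of_injOn (s := F.erase m0)
          (t := P.filter (fun p => y ∈ S p.1 ∧ y ∈ S p.2)) (fun j => (m0, j))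
        · intro j hj
          have hj' := Finset.mem_of_mem_erase hj
          have hne' : j ≠ m0 := Finset.ne_of_mem_erase hj
          have hle : m0 ≤ j := Finset.min'_le F j hj'
          have hlt : m0 < j := lt_of_le_of_ne hle (Ne.symm hne')
          simp only [hP, Finset.mem_coe, Finset.mem_filter, Finset.mem_univ, true_and]
          refine ⟨hlt, ?_, ?_⟩
          · simpa [hF] using hmin
          · simpa [hF] using hj'
        · intro x _ z _ hxz
          exact congrArg Prod.snd hxz
      have hcardF : (F.erase m0).card + 1 = F.card :=
        Finset.card_erase_add_one hmin
      omega
  -- combine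
  have hbon : ∑ i, (T i).card ≤ U.card + ∑ p ∈ P, ((T p.1) ∩ (T p.2)).card := by
    rw [hswap1, hswap2]
    calc ∑ y : Fin N, (univ.filter (fun i => y ∈ S i)).card
        ≤ ∑ y : Fin N, ((if (∃ i, y ∈ S i) then 1 else 0)
            + (P.filter (fun p => y ∈ S p.1 ∧ y ∈ S p.2)).card) :=
          Finset.sum_le_sum (fun y _ => hpt y)
      _ = (∑ y : Fin N, (if (∃ i, y ∈ S i) then 1 else 0))
            + ∑ y : Fin N, (P.filter (fun p => y ∈ S p.1 ∧ y ∈ S p.2)).card :=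
          Finset.sum_add_distrib
      _ = U.card + ∑ y : Fin N, (P.filter (fun p => y ∈ S p.1 ∧ y ∈ S p.2)).card := by
          rw [hU, Finset.card_filter]
  have hAle : A ≤ ∑ i, (T i).card := Finset.sum_le_sum (fun i _ => hTcard i)
  have hIle : ∑ p ∈ P, ((T p.1) ∩ (T p.2)).card ≤ B :=
    Finset.sum_le_sum hIcard
  omega
end

section
/- Let U be a finite set with |U| ≥ 2, let ≺ be a binary relation on U such that for all x ≠ y exactly one of x ≺ y and y ≺ x holds and such that x ⊀ x for all x, and let med : U × U → U be an arbitrary function. Then either there exist x, y, z ∈ U with x ≺ y, y ≺ z, and z ≺ x, or there exist x, y ∈ U with x ≺ y such that med(x, y) fails to lie strictly between x and y, i.e., ¬(x ≺ med(x, y) and med(x, y) ≺ y). (Totality of the Dense-Linear-Ordering search problem.) -/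
/-- **Totality of the Dense-Linear-Ordering search problem.** Let `U` be a finite
set with at least two elements, `≺` a tournament (irreflexive, and for distinct
`x, y` exactly one of `x ≺ y`, `y ≺ x` holds), and `med : U × U → U` arbitrary.
Then there is a transitivity violation (a directed 3-cycle), or a pair `x ≺ y`
whose median is not strictly between `x` and `y`. -/
theorem dlo_total {U : Type*} [Fintype U] (hU : 2 ≤ Fintype.card U)
    (prec : U → U → Prop)
    (hirr : ∀ x : U, ¬ prec x x)
    (htotal : ∀ x y : U, x ≠ y → Xor' (prec x y) (prec y x))
    (med : U × U → U) :
    (∃ x y z : U, prec x y ∧ prec y z ∧ prec z x) ∨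
    (∃ x y : U, prec x y ∧ ¬ (prec x (med (x, y)) ∧ prec (med (x, y)) y)) := by
  by_contra h
  push_neg at h
  obtain ⟨hcyc, hmed⟩ := h
  -- asymmetry
  have hasym : ∀ x y : U, prec x y → ¬ prec y x := by
    intro x y hxy hyx
    have hne : x ≠ y := by rintro rfl; exact hirr x hxy
    rcases htotal x y hne with ⟨_, h2⟩ | ⟨_, h2⟩
    · exact h2 hyx
    · exact h2 hxy
  -- transitivity
  have htrans : ∀ x y z : U, prec x y → prec y z → prec x z := by
    intro x y z hxy hyz
    by_cases hxz : x = z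
    · subst hxz; exact absurd hyz (hasym x y hxy)
    · rcases Xor'.or (htotal x z hxz) with h1 | h1
      · exact h1
      · exact absurd (hcyc x y z hxy hyz) (fun hh => hh h1)
  -- initial pair
  obtain ⟨a, b0, hab⟩ := Fintype.exists_pair_of_one_lt_card (lt_of_lt_of_le one_lt_two hU)
  have hab' : prec a b0 ∨ prec b0 a := Xor'.or (htotal a b0 hab)
  wlog hstart : prec a b0 generalizing a b0
  · exact this b0 a (Ne.symm hab) hab'.symm (hab'.resolve_left hstart)
  -- descending sequence
  let f : ℕ → U := fun n => Nat.rec b0 (fun _ x => med (a, x)) n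
  have hinv : ∀ n, prec a (f n) := by
    intro n
    induction n with
    | zero => exact hstart
    | succ n ih => exact (hmed a (f n) ih).1
  have hdesc : ∀ n, prec (f (n+1)) (f n) := fun n => (hmed a (f n) (hinv n)).2
  have hlt : ∀ m n : ℕ, m < n → prec (f n) (f m) := by
    intro m n hmn
    induction n with
    | zero => omega
    | succ n ih =>
      rcases Nat.lt_succ_iff_lt_or_eq.mp hmn with h1 | h1
      · exact htrans _ _ _ (hdesc n) (ih h1)
      · exact h1 ▸ hdesc n
  have hinj : Function.Injective f := by
    intro m n hmn
    rcases lt_trichotomy m n with h1 | h1 | h1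
    · exact absurd (hlt m n h1) (by rw [hmn]; exact hirr _)
    · exact h1
    · exact absurd (hlt n m h1) (by rw [hmn]; exact hirr _)
  exact by obtain ⟨m, n, hne, he⟩ := Finite.exists_ne_map_eq_of_infinite f; exact hne (hinj he)
end

section
/- Let V be a set with a distinguished element r, let F, L, R : V → V, and let H : V → ℕ. Suppose some v ∈ V satisfies at least one of: (i) v = r and L(r) = r; (ii) L(v) ≠ v and L(L(v)) = L(v); (iii) L(v) ≠ v and H(L(v)) ≤ H(v). Then the Empty-Child-with-Height instance (V, r, F, L, R, H) has a solution: either L(r) = r or R(r) = r or F(r) ≠ r (wrong root), or some u ∈ {v, L(v)} has an empty child (F(L(u)) ≠ u, or F(R(u)) ≠ u, or L(u) = R(u) with L(u) ≠ u), or there exists u ≠ r with u ≠ F(u) and H(u) ≠ H(F(u)) + 1, or H(r) ≠ 1 (wrong height). -/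
/-- **Core casework of the lemma that Empty-Child-with-Height is in PLS.**
If `v` is a solution of the Sink-of-DAG instance with successor `L` and potential
`H` — i.e. (i) `v = r` with `L r = r`, or (ii) `L v ≠ v` and `L (L v) = L v`, or
(iii) `L v ≠ v` and `H (L v) ≤ H v` — then the Empty-Child-with-Height instance
`(V, r, F, L, R, H)` has a solution: a wrong root, an empty child at `v` or `L v`,
a wrong height at some `u ≠ r`, or a wrong height at the root. -/
theorem emptyChildWithHeight_in_PLS {V : Type*} (r : V) (F L R : V → V)
    (H : V → ℕ) (v : V)
    (hv : (v = r ∧ L r = r) ∨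
          (L v ≠ v ∧ L (L v) = L v) ∨
          (L v ≠ v ∧ H (L v) ≤ H v)) :
    (L r = r ∨ R r = r ∨ F r ≠ r) ∨
    (∃ u : V, (u = v ∨ u = L v) ∧
        (F (L u) ≠ u ∨ F (R u) ≠ u ∨ (L u = R u ∧ L u ≠ u))) ∨
    (∃ u : V, u ≠ r ∧ u ≠ F u ∧ H u ≠ H (F u) + 1) ∨
    H r ≠ 1 := by
  rcases hv with ⟨hvr, hLr⟩ | ⟨hne, hfix⟩ | ⟨hne, hle⟩
  · exact Or.inl (Or.inl hLr)
  · by_cases h1 : F (L v) = v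
    · refine Or.inr (Or.inl ⟨L v, Or.inr rfl, Or.inl ?_⟩)
      rw [hfix, h1]; exact fun h => hne h.symm
    · exact Or.inr (Or.inl ⟨v, Or.inl rfl, Or.inl h1⟩)
  · by_cases h1 : F (L v) = v
    · by_cases h2 : L v = r
      · refine Or.inl (Or.inr (Or.inr ?_))
        rw [← h2, h1]
        exact fun h => hne h.symm
      · refine Or.inr (Or.inr (Or.inl ⟨L v, h2, ?_, ?_⟩))
        · rw [h1]; exact hne
        · rw [h1]; omega
    · exact Or.inr (Or.inl ⟨v, Or.inl rfl, Or.inl h1⟩)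
end
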